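/- The ply of an empty-ply drawing of a graph is at most 5. That is, if Γ is a straight-line drawing of a graph in the plane in which no ply-disk contains any vertex other than its center in its interior, then no point of the plane lies in the interior of more than 5 ply-disks. -/

import Mathlib

open Real EuclideanGeometry Metric

noncomputable def plyRadius {V : Type*} (G : SimpleGraph V)
    (pos : V → EuclideanSpace ℝ (Fin 2)) (v : V) : ℝ :=
  (1 / 2) * ⨆ w ∈ G.neighborSet v, dist (pos v) (pos w)

/-- A drawing is empty-ply if no ply-disk contains a vertex other than its center
in its interior. -/
def IsEmptyPly {V : Type*} (G : SimpleGraph V)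
    (pos : V → EuclideanSpace ℝ (Fin 2)) : Prop :=
  ∀ u v : V, u ≠ v → plyRadius G pos v ≤ dist (pos u) (pos v)

/-- Among six angles in `[-π, π]`, two distinct indices have cosine of the
difference at least `1/2`. -/
lemma six_angles_cos_ge_half (f : Fin 6 → ℝ) (hb : ∀ i, -π ≤ f i ∧ f i ≤ π) :
    ∃ i j : Fin 6, i ≠ j ∧ (1 : ℝ)/2 ≤ Real.cos (f i - f j) := by
  by_contra hcon
  push_neg at hcon
  have pi_pos := Real.pi_pos
  set σ := Tuple.sort f with hσ
  have hmono : Monotone (f ∘ σ) := Tuple.monotone_sort f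
  set g : Fin 6 → ℝ := f ∘ σ with hg
  have hgb : ∀ i, -π ≤ g i ∧ g i ≤ π := fun i => hb (σ i)
  have key : ∀ i j : Fin 6, i < j → π/3 < g j - g i := by
    intro i j hij
    by_contra hle
    push_neg at hle
    have h0 : 0 ≤ g j - g i := sub_nonneg.2 (hmono hij.le)
    have hc : Real.cos (π/3) ≤ Real.cos (g j - g i) :=
      Real.cos_le_cos_of_nonneg_of_le_pi h0 (by linarith) hle
    rw [Real.cos_pi_div_three] at hc
    have hne : σ j ≠ σ i := fun h => hij.ne' (σ.injective h)
    have := hcon (σ j) (σ i) hne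
    have : Real.cos (g j - g i) < 1/2 := this
    linarith
  have h01 := key 0 1 (by decide)
  have h12 := key 1 2 (by decide)
  have h23 := key 2 3 (by decide)
  have h34 := key 3 4 (by decide)
  have h45 := key 4 5 (by decide)
  have hbig : 5 * (π/3) < g 5 - g 0 := by linarith
  have hle2pi : g 5 - g 0 ≤ 2 * π := by
    have := (hgb 5).2; have := (hgb 0).1; linarith
  set d := g 5 - g 0 with hd
  have hcosd : (1:ℝ)/2 ≤ Real.cos d := by
    have h1 : 0 ≤ 2 * π - d := by linarith
    have h2 : 2 * π - d ≤ π/3 := by linarith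
    have := Real.cos_le_cos_of_nonneg_of_le_pi h1 (by linarith) h2
    rw [Real.cos_pi_div_three, Real.cos_two_pi_sub] at this
    exact this
  have hne : σ 5 ≠ σ 0 := fun h => by exact absurd (σ.injective h) (by decide)
  have := hcon (σ 5) (σ 0) hne
  have : Real.cos d < 1/2 := this
  linarith

theorem stmt2 {V : Type*} [Fintype V] (G : SimpleGraph V)
    (pos : V → EuclideanSpace ℝ (Fin 2)) (hinj : Function.Injective pos)
    (hep : IsEmptyPly G pos) :
    ∀ p : EuclideanSpace ℝ (Fin 2),
      {v : V | dist p (pos v) < plyRadius G pos v}.ncard ≤ 5 := by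
  classical
  intro p
  by_contra hcard
  push_neg at hcard
  set S : Set V := {v : V | dist p (pos v) < plyRadius G pos v} with hS
  obtain ⟨t, hts, htc⟩ := Set.exists_subset_card_eq (show 6 ≤ S.ncard from hcard)
  have htf : t.Finite := Set.toFinite t
  have hcard6 : htf.toFinset.card = 6 := by
    rw [← Set.ncard_eq_toFinset_card t htf]; exact htc
  set e := Finset.equivFinOfCardEq hcard6 with he
  set q : Fin 6 → V := fun i => (e.symm i : V) with hq
  have hqS : ∀ i, q i ∈ S := by
    intro i
    have : q i ∈ htf.toFinset := (e.symm i).2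
    exact hts (htf.mem_toFinset.mp this)
  have hqinj : ∀ i j : Fin 6, i ≠ j → q i ≠ q j := by
    intro i j hij h
    exact hij (e.symm.injective (Subtype.ext h))
  -- basic distance facts
  have hlt : ∀ i j : Fin 6, i ≠ j → dist p (pos (q i)) < dist (pos (q j)) (pos (q i)) := by
    intro i j hij
    have h1 : dist p (pos (q i)) < plyRadius G pos (q i) := hqS i
    have h2 := hep (q j) (q i) (hqinj j i (Ne.symm hij))
    linarith
  set a : Fin 6 → EuclideanSpace ℝ (Fin 2) := fun i => pos (q i) - p with ha
  have hna : ∀ i, ‖a i‖ = dist p (pos (q i)) := by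
    intro i; rw [dist_comm, dist_eq_norm]
  have hsub : ∀ i j, ‖a i - a j‖ = dist (pos (q j)) (pos (q i)) := by
    intro i j
    rw [dist_eq_norm, ← norm_neg]
    congr 1
    simp [ha]
  have hnlt : ∀ i j : Fin 6, i ≠ j → ‖a i‖ < ‖a i - a j‖ := by
    intro i j hij
    rw [hna, hsub]
    exact hlt i j hij
  have hpos : ∀ i : Fin 6, 0 < ‖a i‖ := by
    intro i
    rcases eq_or_lt_of_le (norm_nonneg (a i)) with h | h
    · exfalso
      have hai : a i = 0 := norm_eq_zero.mp h.symm
      obtain ⟨j, hij⟩ : ∃ j : Fin 6, j ≠ i := by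
        by_cases h0 : i = 0
        · exact ⟨1, by rw [h0]; decide⟩
        · exact ⟨0, Ne.symm h0⟩
      have hc := hnlt j i hij
      rw [hai, sub_zero] at hc
      exact lt_irrefl _ hc
    · exact h
  -- coordinates
  set x : Fin 6 → ℝ := fun i => a i 0 with hx
  set y : Fin 6 → ℝ := fun i => a i 1 with hy
  have hnormsq : ∀ i, ‖a i‖^2 = x i ^2 + y i ^2 := by
    intro i
    rw [EuclideanSpace.norm_eq, Real.sq_sqrt (by positivity)]
    simp [Fin.sum_univ_two, Real.norm_eq_abs, sq_abs, hx, hy]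
  have hnormsub : ∀ i j, ‖a i - a j‖^2 = (x i - x j)^2 + (y i - y j)^2 := by
    intro i j
    rw [EuclideanSpace.norm_eq, Real.sq_sqrt (by positivity)]
    have h0 : (a i - a j) 0 = x i - x j := rfl
    have h1 : (a i - a j) 1 = y i - y j := rfl
    simp [Fin.sum_univ_two, Real.norm_eq_abs, sq_abs, h0, h1]
    rfl
  have hkey : ∀ i j : Fin 6, i ≠ j → x i * x j + y i * y j < ‖a i‖ * ‖a j‖ / 2 := by
    intro i j hij
    have h1 : ‖a i‖ < ‖a i - a j‖ := hnlt i j hij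
    have h2 : ‖a j‖ < ‖a j - a i‖ := hnlt j i (Ne.symm hij)
    have h1sq : ‖a i‖^2 < ‖a i - a j‖^2 :=
      pow_lt_pow_left₀ h1 (norm_nonneg _) (by norm_num)
    have h2sq : ‖a j‖^2 < ‖a j - a i‖^2 :=
      pow_lt_pow_left₀ h2 (norm_nonneg _) (by norm_num)
    rw [hnormsq, hnormsub] at h1sq h2sq
    have hAi := hpos i
    have hAj := hpos j
    have hAi2 := hnormsq i
    have hAj2 := hnormsq j
    have e1 : 2 * (x i * x j + y i * y j) < ‖a j‖^2 := by rw [hAj2]; nlinarith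
    have e2 : 2 * (x i * x j + y i * y j) < ‖a i‖^2 := by rw [hAi2]; nlinarith
    rcases le_total ‖a i‖ ‖a j‖ with hle | hle
    · nlinarith
    · nlinarith
  -- complex arguments
  set z : Fin 6 → ℂ := fun i => ⟨x i, y i⟩ with hz
  have habs : ∀ i, ‖z i‖ = ‖a i‖ := by
    intro i
    rw [Complex.norm_def, Complex.normSq_apply]
    have : ‖a i‖ = Real.sqrt (‖a i‖^2) := (Real.sqrt_sq (norm_nonneg _)).symm
    rw [this, hnormsq]
    congr 1
    simp [hz]; ring
  have hzne : ∀ i, z i ≠ 0 := by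
    intro i h
    have := habs i
    rw [h] at this
    simp at this
    exact (hpos i).ne' this.symm
  set θ : Fin 6 → ℝ := fun i => (z i).arg with hθ
  have hcoslt : ∀ i j : Fin 6, i ≠ j → Real.cos (θ i - θ j) < 1/2 := by
    intro i j hij
    have hre : ∀ k, (z k).re = x k := fun k => rfl
    have him : ∀ k, (z k).im = y k := fun k => rfl
    rw [Real.cos_sub]
    show Real.cos (z i).arg * Real.cos (z j).arg +
        Real.sin (z i).arg * Real.sin (z j).arg < 1/2
    rw [Complex.cos_arg (hzne i), Complex.cos_arg (hzne j),
        Complex.sin_arg, Complex.sin_arg, habs i, habs j, hre, hre, him, him]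
    have hk := hkey i j hij
    have hAi := hpos i
    have hAj := hpos j
    rw [div_mul_div_comm, div_mul_div_comm, ← add_div, div_lt_iff₀ (by positivity)]
    linarith
  obtain ⟨i, j, hij, hge⟩ := six_angles_cos_ge_half θ (fun i =>
    ⟨le_of_lt (Complex.neg_pi_lt_arg (z i)), Complex.arg_le_pi (z i)⟩)
  exact absurd hge (not_le.mpr (hcoslt i j hij))
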